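/- If r and t are introductions (abstractions or products) and rs ≅* tu, then r ≅* t and s ≅* u. -/

import Mathlib

/-- Types: A ::= τ | A ⇒ A | A ∧ A -/
inductive Ty : Type
  | tau : Ty
  | imp : Ty → Ty → Ty
  | conj : Ty → Ty → Ty
  deriving DecidableEq

/-- Type equivalence ≡: smallest congruence with the four isomorphisms. -/
inductive TyEq : Ty → Ty → Prop
  | refl (A) : TyEq A A
  | symm {A B} : TyEq A B → TyEq B A
  | trans {A B C} : TyEq A B → TyEq B C → TyEq A C
  | impCongr {A A' B B'} : TyEq A A' → TyEq B B' → TyEq (.imp A B) (.imp A' B')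
  | conjCongr {A A' B B'} : TyEq A A' → TyEq B B' → TyEq (.conj A B) (.conj A' B')
  | comm (A B) : TyEq (.conj A B) (.conj B A)
  | assoc (A B C) : TyEq (.conj A (.conj B C)) (.conj (.conj A B) C)
  | dist (A B C) : TyEq (.imp A (.conj B C)) (.conj (.imp A B) (.imp A C))
  | curry (A B C) : TyEq (.imp (.conj A B) C) (.imp A (.imp B C))

/-- Add premise `a` to a prime factor: τ becomes a⇒τ (convention a∧∅ = a),
    c⇒τ becomes (a∧c)⇒τ. -/
def addPrem (a : Ty) : Ty → Ty
  | .tau => .imp a .tau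
  | .imp c .tau => .imp (.conj a c) .tau
  | t => t

/-- Multiset of prime factors. -/
def PF : Ty → Multiset Ty
  | .tau => {.tau}
  | .imp a b => (PF b).map (addPrem a)
  | .conj a b => PF a + PF b

/-- Terms: r ::= x | λx^A.r | r r | r×r | π_A(r).  Variables are natural
numbers; a global assignment `vt : ℕ → Ty` gives each variable its intrinsic
type, so `x ∈ V_A` is rendered as `TyEq (vt x) A` (the partition respects ≡). -/
inductive Tm : Type
  | var : ℕ → Tm
  | lam : Ty → ℕ → Tm → Tm
  | app : Tm → Tm → Tm
  | prod : Tm → Tm → Tm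
  | proj : Ty → Tm → Tm
  deriving DecidableEq

/-- Typing judgment of System I-η. -/
inductive HasTy (vt : ℕ → Ty) : Tm → Ty → Prop
  | var {n A} : TyEq (vt n) A → HasTy vt (.var n) A
  | equiv {r A B} : HasTy vt r A → TyEq A B → HasTy vt r B
  | lam {A n r B} : TyEq (vt n) A → HasTy vt r B → HasTy vt (.lam A n r) (.imp A B)
  | app {r s A B} : HasTy vt r (.imp A B) → HasTy vt s A → HasTy vt (.app r s) B
  | prod {r s A B} : HasTy vt r A → HasTy vt s B → HasTy vt (.prod r s) (.conj A B)
  | proj {r A B} : HasTy vt r (.conj A B) → HasTy vt (.proj A r) A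

/-- Structural equivalence ≅ on terms: smallest symmetric, contextually closed
relation with comm, asso, dist, curry. -/
inductive TEq : Tm → Tm → Prop
  | comm (r s) : TEq (.prod r s) (.prod s r)
  | assoc (r s t) : TEq (.prod (.prod r s) t) (.prod r (.prod s t))
  | dist (A x r s) : TEq (.lam A x (.prod r s)) (.prod (.lam A x r) (.lam A x s))
  | curry (r s t) : TEq (.app (.app r s) t) (.app r (.prod s t))
  | symm {r s} : TEq r s → TEq s r
  | lamCongr {r s} (A x) : TEq r s → TEq (.lam A x r) (.lam A x s)
  | appLeft {r s} (t) : TEq r s → TEq (.app r t) (.app s t)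
  | appRight {r s} (t) : TEq r s → TEq (.app t r) (.app t s)
  | prodLeft {r s} (t) : TEq r s → TEq (.prod r t) (.prod s t)
  | prodRight {r s} (t) : TEq r s → TEq (.prod t r) (.prod t s)
  | projCongr {r s} (A) : TEq r s → TEq (.proj A r) (.proj A s)

/-- P counts the number of pairs in a term. -/
def Pm : Tm → ℕ
  | .var _ => 0
  | .lam _ _ r => Pm r
  | .app _ _ => 0
  | .prod r s => 1 + Pm r + Pm s
  | .proj _ _ => 0

/-- The measure M on terms. -/
def Mm : Tm → ℕ
  | .var _ => 1
  | .lam _ _ r => 1 + Mm r + Pm r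
  | .app r s => 1 + Mm r + Mm s
  | .prod r s => 1 + Mm r + Mm s
  | .proj _ r => 1 + Mm r

/-- An introduction is an abstraction or a product. -/
def IsIntro : Tm → Prop
  | .lam _ _ _ => True
  | .prod _ _ => True
  | _ => False

/-- Lemma: if r, t are introductions and rs ≅* tu then r ≅* t and s ≅* u. -/

def isAppB : Tm → Bool
  | .app _ _ => true
  | _ => false

def headT : Tm → Tm
  | .app a _ => headT a
  | t => t

def argpT : Tm → Tm
  | .app a b => if isAppB a then .prod (argpT a) b else b
  | t => t

@[simp] theorem isAppB_app (a b : Tm) : isAppB (Tm.app a b) = true := rfl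
@[simp] theorem headT_app (a b : Tm) : headT (Tm.app a b) = headT a := rfl
@[simp] theorem argpT_app (a b : Tm) :
    argpT (Tm.app a b) = if isAppB a then .prod (argpT a) b else b := rfl
theorem headT_nonapp {a : Tm} (h : isAppB a = false) : headT a = a := by
  cases a <;> simp_all [headT, isAppB]

theorem rtg_symm {a b : Tm} (h : Relation.ReflTransGen TEq a b) :
    Relation.ReflTransGen TEq b a := by
  induction h with
  | refl => exact Relation.ReflTransGen.refl
  | tail _ h2 ih => exact Relation.ReflTransGen.head h2.symm ih

theorem teq_step {u v : Tm} (h : TEq u v) :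
    isAppB u = isAppB v ∧ (isAppB u = true →
      Relation.ReflTransGen TEq (headT u) (headT v) ∧
      Relation.ReflTransGen TEq (argpT u) (argpT v)) := by
  induction h with
  | comm r s => simp [isAppB]
  | assoc r s t => simp [isAppB]
  | dist A x r s => simp [isAppB]
  | curry r s t =>
    refine ⟨rfl, fun _ => ⟨Relation.ReflTransGen.refl, ?_⟩⟩
    simp only [argpT_app, isAppB_app, if_true]
    cases hr : isAppB r <;> simp only [hr, if_true, if_false, Bool.false_eq_true]
    · exact Relation.ReflTransGen.refl
    · exact Relation.ReflTransGen.single (TEq.assoc _ _ _)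
  | symm h ih =>
    refine ⟨ih.1.symm, fun hv => ?_⟩
    obtain ⟨h1, h2⟩ := ih.2 (ih.1 ▸ hv)
    exact ⟨rtg_symm h1, rtg_symm h2⟩
  | lamCongr A x h ih => simp [isAppB]
  | @appLeft a a' t h ih =>
    refine ⟨rfl, fun _ => ?_⟩
    cases ha : isAppB a with
    | false =>
      have ha' : isAppB a' = false := ih.1 ▸ ha
      refine ⟨?_, ?_⟩
      · rw [headT_app, headT_app, headT_nonapp ha, headT_nonapp ha']
        exact Relation.ReflTransGen.single h
      · simp only [argpT_app, ha, ha', if_false, Bool.false_eq_true]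
        exact Relation.ReflTransGen.refl
    | true =>
      have ha' : isAppB a' = true := ih.1 ▸ ha
      obtain ⟨h1, h2⟩ := ih.2 ha
      refine ⟨h1, ?_⟩
      simp only [argpT_app, ha, ha', if_true]
      exact Relation.ReflTransGen.lift (fun x => Tm.prod x t)
        (fun _ _ hh => TEq.prodLeft t hh) _ _ h2
  | @appRight a a' t h ih =>
    refine ⟨rfl, fun _ => ⟨Relation.ReflTransGen.refl, ?_⟩⟩
    simp only [argpT_app]
    cases ht : isAppB t <;> simp only [if_true, if_false, Bool.false_eq_true]
    · exact Relation.ReflTransGen.single h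
    · exact Relation.ReflTransGen.lift (fun x => Tm.prod (argpT t) x)
        (fun _ _ hh => TEq.prodRight (argpT t) hh) _ _ (Relation.ReflTransGen.single h)
  | prodLeft t h ih => simp [isAppB]
  | prodRight t h ih => simp [isAppB]
  | projCongr A h ih => simp [isAppB]

theorem teq_chain {u v : Tm} (h : Relation.ReflTransGen TEq u v) (hu : isAppB u = true) :
    isAppB v = true ∧ Relation.ReflTransGen TEq (headT u) (headT v) ∧
      Relation.ReflTransGen TEq (argpT u) (argpT v) := by
  induction h with
  | refl => exact ⟨hu, Relation.ReflTransGen.refl, Relation.ReflTransGen.refl⟩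
  | tail h2 hst ih =>
    obtain ⟨h1, h2, h3⟩ := ih
    obtain ⟨e, hf⟩ := teq_step hst
    obtain ⟨p, q⟩ := hf h1
    exact ⟨h1 ▸ e.symm, h2.trans p, h3.trans q⟩
theorem intro_app_eq_intro_app (r s t u : Tm)
    (hr : IsIntro r) (ht : IsIntro t)
    (h : Relation.ReflTransGen TEq (.app r s) (.app t u)) :
    Relation.ReflTransGen TEq r t ∧ Relation.ReflTransGen TEq s u := by
  have hra : isAppB r = false := by cases r <;> simp_all [IsIntro, isAppB]
  have hta : isAppB t = false := by cases t <;> simp_all [IsIntro, isAppB]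
  obtain ⟨_, h1, h2⟩ := teq_chain h (by simp [isAppB])
  constructor
  · have e1 : headT (Tm.app r s) = r := by cases r <;> simp_all [isAppB, headT]
    have e2 : headT (Tm.app t u) = t := by cases t <;> simp_all [isAppB, headT]
    rwa [e1, e2] at h1
  · have e1 : argpT (Tm.app r s) = s := by simp [argpT, hra]
    have e2 : argpT (Tm.app t u) = u := by simp [argpT, hta]
    rwa [e1, e2] at h2
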